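/- Let A, B₀, B₁ be Hermitian d×d complex matrices with A² = I and ‖B₀‖ ≤ 1, ‖B₁‖ ≤ 1. Let c₀, c₁ > 0 and suppose (c₀ + c₁)·A = c₀·B₀ + c₁·B₁. Then B₀ = A and B₁ = A. -/

import Mathlib

open scoped Matrix Matrix.Norms.L2Operator

open Matrix RCLike

private lemma norm_lin_le {d : ℕ} (B : Matrix (Fin d) (Fin d) ℂ) (hBn : ‖B‖ ≤ 1)
    (x : EuclideanSpace ℂ (Fin d)) : ‖toEuclideanLin B x‖ ≤ ‖x‖ := by
  have h := B.l2_opNorm_mulVec x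
  have hx : toEuclideanLin B x = (EuclideanSpace.equiv (Fin d) ℂ).symm (B *ᵥ x) := rfl
  rw [hx]
  calc ‖(EuclideanSpace.equiv (Fin d) ℂ).symm (B *ᵥ x)‖ ≤ ‖B‖ * ‖x‖ := h
    _ ≤ 1 * ‖x‖ := by
        have := norm_nonneg x
        nlinarith
    _ = ‖x‖ := one_mul _

private lemma fix_of_inner {d : ℕ} (B : Matrix (Fin d) (Fin d) ℂ) (hBn : ‖B‖ ≤ 1)
    (x : EuclideanSpace ℂ (Fin d))
    (hx : ‖x‖ ^ 2 ≤ re (inner ℂ x (toEuclideanLin B x) : ℂ)) :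
    toEuclideanLin B x = x := by
  set w := toEuclideanLin B x with hw
  have hnw : ‖w‖ ≤ ‖x‖ := norm_lin_le B hBn x
  have hre : re (inner ℂ w x : ℂ) = re (inner ℂ x w : ℂ) := inner_re_symm _ _
  have hsq : ‖w - x‖ ^ 2 = ‖w‖ ^ 2 - 2 * re (inner ℂ w x : ℂ) + ‖x‖ ^ 2 :=
    @norm_sub_sq ℂ _ _ _ _ w x
  have h0 : ‖w - x‖ ^ 2 ≤ 0 := by
    rw [hsq, hre]
    nlinarith [norm_nonneg x, norm_nonneg w]
  have : ‖w - x‖ = 0 := by nlinarith [norm_nonneg (w - x)]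
  have := norm_eq_zero.mp this
  linear_combination (norm := module) this

private lemma key {d : ℕ} (B₀ B₁ : Matrix (Fin d) (Fin d) ℂ)
    (hB₀n : ‖B₀‖ ≤ 1) (hB₁n : ‖B₁‖ ≤ 1) {c₀ c₁ : ℝ} (hc₀ : 0 < c₀) (hc₁ : 0 < c₁)
    (v : EuclideanSpace ℂ (Fin d))
    (h : (c₀ + c₁) • v = c₀ • toEuclideanLin B₀ v + c₁ • toEuclideanLin B₁ v) :
    toEuclideanLin B₀ v = v ∧ toEuclideanLin B₁ v = v := by
  set w₀ := toEuclideanLin B₀ v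
  set w₁ := toEuclideanLin B₁ v
  have hre : ∀ (r : ℝ) (y : EuclideanSpace ℂ (Fin d)),
      re (inner ℂ v (r • y) : ℂ) = r * re (inner ℂ v y : ℂ) := by
    intro r y
    rw [RCLike.real_smul_eq_coe_smul (K := ℂ), inner_smul_right]
    simp
  have e : (c₀ + c₁) * ‖v‖ ^ 2 = c₀ * re (inner ℂ v w₀ : ℂ) + c₁ * re (inner ℂ v w₁ : ℂ) := by
    have h2 := congrArg (fun y => re (inner ℂ v y : ℂ)) h
    simp only [inner_add_right, map_add, hre] at h2
    rwa [inner_self_eq_norm_sq] at h2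
  have hb : ∀ (B : Matrix (Fin d) (Fin d) ℂ), ‖B‖ ≤ 1 →
      re (inner ℂ v (toEuclideanLin B v) : ℂ) ≤ ‖v‖ ^ 2 := by
    intro B hB
    calc re (inner ℂ v (toEuclideanLin B v) : ℂ) ≤ ‖(inner ℂ v (toEuclideanLin B v) : ℂ)‖ :=
          re_le_norm _
      _ ≤ ‖v‖ * ‖toEuclideanLin B v‖ := norm_inner_le_norm _ _
      _ ≤ ‖v‖ * ‖v‖ := by
          have := norm_lin_le B hB v
          nlinarith [norm_nonneg v]
      _ = ‖v‖ ^ 2 := (sq ‖v‖).symm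
  have h₀ := hb B₀ hB₀n
  have h₁ := hb B₁ hB₁n
  constructor
  · exact fix_of_inner B₀ hB₀n v (by nlinarith)
  · exact fix_of_inner B₁ hB₁n v (by nlinarith)

/-- Rigidity of reflections: if `A` is Hermitian with `A² = I`, `B₀, B₁` are Hermitian
with (`ℓ²`-operator) norm at most `1`, `c₀, c₁ > 0`, and
`(c₀ + c₁)·A = c₀·B₀ + c₁·B₁`, then `B₀ = A` and `B₁ = A`. -/
theorem stmt_5 {d : ℕ} (A B₀ B₁ : Matrix (Fin d) (Fin d) ℂ)
    (hA : A.IsHermitian) (hA2 : A ^ 2 = 1)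
    (hB₀ : B₀.IsHermitian) (hB₁ : B₁.IsHermitian)
    (hB₀n : ‖B₀‖ ≤ 1) (hB₁n : ‖B₁‖ ≤ 1)
    (c₀ c₁ : ℝ) (hc₀ : 0 < c₀) (hc₁ : 0 < c₁)
    (hsplit : (c₀ + c₁) • A = c₀ • B₀ + c₁ • B₁) :
    B₀ = A ∧ B₁ = A := by
  set f := toEuclideanLin A with hf
  have hnegapp : ∀ (B : Matrix (Fin d) (Fin d) ℂ) (y : EuclideanSpace ℂ (Fin d)),
      toEuclideanLin (-B) y = -(toEuclideanLin B y) := by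
    intro B y
    rw [map_neg]
    rfl
  have hsplit' : ∀ x : EuclideanSpace ℂ (Fin d),
      (c₀ + c₁) • f x = c₀ • toEuclideanLin B₀ x + c₁ • toEuclideanLin B₁ x := by
    intro x
    have := congrArg (fun M => toEuclideanLin M x) hsplit
    simpa [hf, toEuclideanLin_apply, Matrix.add_mulVec, Matrix.smul_mulVec] using this
  have hff : ∀ x : EuclideanSpace ℂ (Fin d), f (f x) = x := by
    intro x
    have : f (f x) = toEuclideanLin (A * A) x := by
      simp [hf, toEuclideanLin_apply, Matrix.mulVec_mulVec]
    rw [this, ← pow_two, hA2]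
    simp [toEuclideanLin_apply]
  have main : ∀ x : EuclideanSpace ℂ (Fin d),
      toEuclideanLin B₀ x = f x ∧ toEuclideanLin B₁ x = f x := by
    intro x
    set p : EuclideanSpace ℂ (Fin d) := ((2 : ℂ)⁻¹) • (x + f x) with hp
    set q : EuclideanSpace ℂ (Fin d) := ((2 : ℂ)⁻¹) • (x - f x) with hq
    have hfp : f p = p := by
      have h1 : f p = (2 : ℂ)⁻¹ • (f x + x) := by
        rw [hp, _root_.map_smul, map_add, hff]
      rw [h1, hp]
      module
    have hfq : f q = -q := by
      have h1 : f q = (2 : ℂ)⁻¹ • (f x - x) := by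
        rw [hq, _root_.map_smul, map_sub, hff]
      rw [h1, hq]
      module
    have hPeq : (c₀ + c₁) • p = c₀ • toEuclideanLin B₀ p + c₁ • toEuclideanLin B₁ p := by
      have := hsplit' p
      rwa [hfp] at this
    have hP := key B₀ B₁ hB₀n hB₁n hc₀ hc₁ p hPeq
    have hQeq : (c₀ + c₁) • q =
        c₀ • toEuclideanLin (-B₀) q + c₁ • toEuclideanLin (-B₁) q := by
      rw [hnegapp, hnegapp, smul_neg, smul_neg, ← neg_add]
      have h2 := hsplit' q
      rw [hfq, smul_neg] at h2
      rw [← h2, neg_neg]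
    have hQ := key (-B₀) (-B₁) (by rwa [norm_neg]) (by rwa [norm_neg]) hc₀ hc₁ q hQeq
    have hQ₀ : toEuclideanLin B₀ q = -q := by
      have := hQ.1
      rw [hnegapp] at this
      exact neg_eq_iff_eq_neg.mp this
    have hQ₁ : toEuclideanLin B₁ q = -q := by
      have := hQ.2
      rw [hnegapp] at this
      exact neg_eq_iff_eq_neg.mp this
    have hxpq : x = p + q := by
      rw [hp, hq]; module
    have hfx : f x = p - q := by
      rw [hp, hq]; module
    constructor
    · calc toEuclideanLin B₀ x = toEuclideanLin B₀ (p + q) := by rw [← hxpq]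
        _ = toEuclideanLin B₀ p + toEuclideanLin B₀ q := map_add _ _ _
        _ = p + -q := by rw [hP.1, hQ₀]
        _ = f x := by rw [hfx]; module
    · calc toEuclideanLin B₁ x = toEuclideanLin B₁ (p + q) := by rw [← hxpq]
        _ = toEuclideanLin B₁ p + toEuclideanLin B₁ q := map_add _ _ _
        _ = p + -q := by rw [hP.2, hQ₁]
        _ = f x := by rw [hfx]; module
  constructor
  · exact Matrix.toEuclideanLin.injective (LinearMap.ext fun x => (main x).1)
  · exact Matrix.toEuclideanLin.injective (LinearMap.ext fun x => (main x).2)
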